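/- For any ultimately periodic ω-word w = u v^ω, the set of all decompositions of w equals ⋃_{k=1}^{n} { (x_k y_k^i, y_k^j) : i ≥ 0, j ≥ 1 }, where n is the length of the smallest period of (u, v) and (x_k, y_k) ranges over the n shortest forms corresponding to the n distinct cyclic rotations of the smallest period. -/

import Mathlib

/-- Prepend a finite word to an infinite word. -/
def prependW {α : Type} (u : List α) (w : ℕ → α) : ℕ → α :=
  fun i => if h : i < u.length then u.get ⟨i, h⟩ else w (i - u.length)

/-- The periodic infinite word `v^ω` (arbitrary when `v = []`). -/
def periodW {α : Type} [Inhabited α] (v : List α) : ℕ → α :=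
  fun i => v.getD (i % v.length) default

/-- The ultimately periodic word `u · v^ω`. -/
def upw {α : Type} [Inhabited α] (u v : List α) : ℕ → α :=
  prependW u (periodW v)

/-- The ultimately periodic words of an ω-language. -/
def UP {α : Type} [Inhabited α] (L : Set (ℕ → α)) : Set (ℕ → α) :=
  { w | ∃ u v : List α, v ≠ [] ∧ w = upw u v ∧ w ∈ L }

/-- `v^k` : `k`-fold repetition of the finite word `v`. -/
def rep {α : Type} (v : List α) (k : ℕ) : List α :=
  (List.replicate k v).flatten
/-- `r` is the smallest period of a decomposition with period word `v`. -/
def IsSmallestPeriod {α : Type} [Inhabited α] (r v : List α) : Prop :=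
  r ≠ [] ∧ r <+: v ∧ periodW r = periodW v ∧
    ∀ t : List α, t ≠ [] → t <+: r → t ≠ r → periodW t ≠ periodW r

/-- Cyclic rotation of a finite word by `k` positions. -/
def rot {α : Type} (r : List α) (k : ℕ) : List α := r.drop k ++ r.take k


namespace S9

variable {α : Type} [Inhabited α]

/-- `p` is a (global) period of the infinite word `f`. -/
def Per (f : ℕ → α) (p : ℕ) : Prop := ∀ i, f (i + p) = f i

lemma per_mul {f : ℕ → α} {p : ℕ} (h : Per f p) (t i : ℕ) : f (i + t * p) = f i := by
  induction t with
  | zero => simp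
  | succ t ih =>
    have h2 := h (i + t * p)
    rw [Nat.succ_mul, ← Nat.add_assoc, h2, ih]

lemma per_mod {f : ℕ → α} {p : ℕ} (h : Per f p) (i : ℕ) : f i = f (i % p) := by
  conv_lhs => rw [← Nat.mod_add_div' i p]
  exact per_mul h _ _

lemma per_congr {f : ℕ → α} {p : ℕ} (h : Per f p) {x y : ℕ} (hxy : x ≡ y [MOD p]) :
    f x = f y := by
  rw [per_mod h x, per_mod h y, hxy]

lemma per_gcd {f : ℕ → α} : ∀ {p q : ℕ}, Per f p → Per f q → Per f (Nat.gcd p q) := by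
  intro p q
  induction p, q using Nat.gcd.induction with
  | H0 q => intro _ hq; simpa using hq
  | H1 p q hp ih =>
    intro hpp hqq
    rw [Nat.gcd_rec]
    refine ih ?_ hpp
    intro i
    calc f (i + q % p) = f (i + q % p + q / p * p) := (per_mul hpp _ _).symm
      _ = f (i + q) := by rw [Nat.add_assoc, Nat.mod_add_div']
      _ = f i := hqq i

lemma per_of_tail {f : ℕ → α} {n p c : ℕ} (hn : Per f n) (hn0 : 0 < n)
    (h : ∀ i, f (c + i + p) = f (c + i)) : Per f p := by
  intro i
  have hcn : c ≤ c * n := Nat.le_mul_of_pos_right c hn0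
  calc f (i + p) = f (i + p + c * n) := (per_mul hn c _).symm
    _ = f (c + (i + c * n - c) + p) := by congr 1; omega
    _ = f (c + (i + c * n - c)) := h _
    _ = f (i + c * n) := by congr 1; omega
    _ = f i := per_mul hn c i

lemma periodW_per {v : List α} (hv : v ≠ []) : Per (periodW v) v.length := by
  intro i; simp [periodW, Nat.add_mod_right]

lemma rot_length (r : List α) (k : ℕ) : (rot r k).length = r.length := by
  simp [rot]; omega
lemma periodW_rot {r : List α} (hr : r ≠ []) {k : ℕ} (hk : k < r.length) (i : ℕ) :
    periodW (rot r k) i = periodW r (k + i) := by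
  have hn : 0 < r.length := List.length_pos_iff.mpr hr
  have hlen : (rot r k).length = r.length := rot_length r k
  have hj : i % r.length < r.length := Nat.mod_lt _ hn
  show (rot r k).getD (i % (rot r k).length) default = r.getD ((k + i) % r.length) default
  rw [hlen]
  rcases Nat.lt_or_ge (i % r.length) (r.length - k) with hcase | hcase
  · have h1 : (k + i) % r.length = k + i % r.length := by
      rw [← Nat.add_mod_mod, Nat.mod_eq_of_lt (by omega)]
    rw [h1, List.getD_eq_getElem _ _ (by omega : i % r.length < (rot r k).length),
        List.getD_eq_getElem _ _ (by omega : k + i % r.length < r.length)]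
    show (r.drop k ++ r.take k)[i % r.length]'(by simp; omega) = _
    simp only [List.getElem_append_left (by simpa using hcase : i % r.length < (r.drop k).length)]
    simp
  · have h1 : (k + i) % r.length = k + i % r.length - r.length := by
      rw [← Nat.add_mod_mod, Nat.mod_eq_sub_mod (by omega), Nat.mod_eq_of_lt (by omega)]
    rw [h1, List.getD_eq_getElem _ _ (by omega : i % r.length < (rot r k).length),
        List.getD_eq_getElem _ _ (by omega : k + i % r.length - r.length < r.length)]
    show (r.drop k ++ r.take k)[i % r.length]'(by simp; omega) = _
    simp only [List.getElem_append_right (by simpa using hcase : (r.drop k).length ≤ i % r.length)]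
    simp only [List.getElem_take]
    congr 1
    simp only [List.length_drop]
    omega

lemma prependW_lt {u : List α} {f : ℕ → α} {i : ℕ} (h : i < u.length) :
    prependW u f i = u[i] := dif_pos h

lemma prependW_ge {u : List α} {f : ℕ → α} {i : ℕ} (h : u.length ≤ i) :
    prependW u f i = f (i - u.length) := dif_neg (by omega)

lemma prependW_append (a b : List α) (f : ℕ → α) :
    prependW (a ++ b) f = prependW a (prependW b f) := by
  funext i
  rcases Nat.lt_or_ge i a.length with h | h
  · rw [prependW_lt (by simp; omega), prependW_lt h, List.getElem_append_left h]
  · rcases Nat.lt_or_ge i (a.length + b.length) with h2 | h2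
    · rw [prependW_lt (by simp; omega), prependW_ge h, prependW_lt (by omega),
        List.getElem_append_right (by omega)]
    · rw [prependW_ge (by simp; omega), prependW_ge h, prependW_ge (by omega)]
      simp; congr 1; omega

lemma prependW_self {s : List α} (hs : s ≠ []) :
    prependW s (periodW s) = periodW s := by
  have hn : 0 < s.length := List.length_pos_iff.mpr hs
  funext i
  rcases Nat.lt_or_ge i s.length with h | h
  · rw [prependW_lt h]
    show _ = s.getD (i % s.length) default
    rw [Nat.mod_eq_of_lt h, List.getD_eq_getElem _ _ h]
  · rw [prependW_ge h]
    show s.getD ((i - s.length) % s.length) default = s.getD (i % s.length) default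
    congr 1
    conv_rhs => rw [show i = i - s.length + s.length by omega, Nat.add_mod_right]

lemma rep_succ (s : List α) (i : ℕ) : rep s (i + 1) = s ++ rep s i := by
  simp [rep, List.replicate_succ]

lemma rep_length (s : List α) (i : ℕ) : (rep s i).length = i * s.length := by
  induction i with
  | zero => simp [rep]
  | succ i ih => rw [rep_succ]; simp [ih]; ring

lemma prependW_rep {s : List α} (hs : s ≠ []) (i : ℕ) :
    prependW (rep s i) (periodW s) = periodW s := by
  induction i with
  | zero =>
    funext j; rw [show rep s 0 = [] by simp [rep], prependW_ge (by simp)]; simp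
  | succ i ih => rw [rep_succ, prependW_append, ih, prependW_self hs]

lemma rep_getD {s : List α} (hs : s ≠ []) {i q : ℕ} (h : q < i * s.length) :
    (rep s i).getD q default = s.getD (q % s.length) default := by
  induction i generalizing q with
  | zero => omega
  | succ i ih =>
    rw [rep_succ]
    rcases Nat.lt_or_ge q s.length with h2 | h2
    · rw [List.getD_eq_getElem _ _ (by simp [rep_length]; omega),
        List.getElem_append_left h2, Nat.mod_eq_of_lt h2, List.getD_eq_getElem _ _ h2]
    · have h3 : q - s.length < i * s.length := by
        have := rep_length s (i+1); simp [Nat.succ_mul] at h ⊢; omega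
      rw [List.getD_eq_getElem _ _ (by simp [rep_length]; omega),
        List.getElem_append_right (by omega)]
      have h4 := ih h3
      rw [List.getD_eq_getElem _ _ (by rw [rep_length]; omega)] at h4
      have h5 : (q - s.length) % s.length = q % s.length := by
        conv_rhs => rw [show q = q - s.length + s.length by omega, Nat.add_mod_right]
      rw [← h5, ← h4]

lemma periodW_rep {s : List α} (hs : s ≠ []) {j : ℕ} (hj : 1 ≤ j) :
    periodW (rep s j) = periodW s := by
  have hn : 0 < s.length := List.length_pos_iff.mpr hs
  funext i
  show (rep s j).getD (i % (rep s j).length) default = s.getD (i % s.length) default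
  rw [rep_length]
  have hjn : 0 < j * s.length := by positivity
  rw [rep_getD hs (Nat.mod_lt _ hjn)]
  congr 1
  rw [Nat.mod_mod_of_dvd _ ⟨j, Nat.mul_comm _ _⟩]

lemma periodW_getElem {v : List α} {p : ℕ} (h : p < v.length) :
    periodW v p = v[p] := by
  show v.getD (p % v.length) default = _
  rw [Nat.mod_eq_of_lt h, List.getD_eq_getElem _ _ h]
lemma smallest_dvd {r v : List α} (hr : IsSmallestPeriod r v) {p : ℕ} (hp : 0 < p)
    (hper : Per (periodW r) p) : r.length ∣ p := by
  obtain ⟨hrne, -, -, hmin⟩ := hr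
  have hn : 0 < r.length := List.length_pos_iff.mpr hrne
  set g := Nat.gcd p r.length with hg
  have hgper : Per (periodW r) g := per_gcd hper (periodW_per hrne)
  have hg0 : 0 < g := Nat.gcd_pos_of_pos_left _ hp
  have hgle : g ≤ r.length := Nat.le_of_dvd hn (Nat.gcd_dvd_right _ _)
  by_cases hcase : g = r.length
  · have h1 : r.length ∣ g := hcase ▸ dvd_refl _
    exact h1.trans (Nat.gcd_dvd_left _ _)
  · exfalso
    have hglt : g < r.length := lt_of_le_of_ne hgle hcase
    have htlen : (r.take g).length = g := by simp; omega
    refine hmin (r.take g) ?_ (List.take_prefix _ _) ?_ ?_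
    · intro h; rw [h] at htlen; simp at htlen; omega
    · intro h
      have h2 := congrArg List.length h
      rw [htlen] at h2; omega
    · funext i
      show (r.take g).getD (i % (r.take g).length) default = periodW r i
      rw [htlen]
      have hig : i % g < g := Nat.mod_lt _ hg0
      rw [List.getD_eq_getElem _ _ (by omega)]
      simp only [List.getElem_take]
      have h1 : periodW r i = periodW r (i % g) := per_mod hgper i
      rw [h1]
      show _ = r.getD (i % g % r.length) default
      have h2 : i % g % r.length = i % g := Nat.mod_eq_of_lt (by omega)
      rw [h2, List.getD_eq_getElem _ _ (by omega)]

end S9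

open S9

/-- The decompositions of `u v^ω` are exactly the pairs `(x_k y_k^i, y_k^j)`
(`i ≥ 0`, `j ≥ 1`), where `y_k` ranges over the `n` cyclic rotations of the
smallest period `r` (`n = |r|`) and `(x_k, y_k)` is the corresponding
shortest form. -/
theorem stmt_9 {α : Type} [Inhabited α] (u v r : List α) (hv : v ≠ [])
    (hr : IsSmallestPeriod r v) :
    ∃ X : ℕ → List α,
      (∀ k, k < r.length →
        (prependW (X k) (periodW (rot r k)) = upw u v ∧
          ∀ x' : List α, X k ≠ x' ++ rot r k)) ∧
      ∀ u' v' : List α, v' ≠ [] →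
        (prependW u' (periodW v') = upw u v ↔
          ∃ k, k < r.length ∧ ∃ (i j : ℕ), 1 ≤ j ∧
            u' = X k ++ rep (rot r k) i ∧ v' = rep (rot r k) j) := by
  classical
  have hrS := hr
  obtain ⟨hrne, hrpre, hrper, hrmin⟩ := hr
  set n := r.length with hn
  have hn0 : 0 < n := List.length_pos_iff.mpr hrne
  set W : ℕ → α := upw u v with hW
  have hWr : W = prependW u (periodW r) := by rw [hW, upw, hrper]
  set b := u.length with hb
  have hWb : ∀ i, W (b + i) = periodW r i := by
    intro i; rw [hWr, prependW_ge (by omega)]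
    congr 1; omega
  set P : ℕ → ℕ → Prop := fun k ℓ => ∀ i, W (ℓ + i) = periodW (rot r k) i with hP
  set X : ℕ → List α := fun k => List.ofFn (fun p : Fin (sInf {ℓ | P k ℓ}) => W p) with hX
  have hslen : ∀ k, (rot r k).length = n := fun k => rot_length r k
  have hsne : ∀ k, rot r k ≠ [] := by
    intro k h
    have h2 := hslen k; rw [h] at h2; simp at h2; omega
  have hsper : ∀ k, Per (periodW (rot r k)) n := by
    intro k; have h2 := periodW_per (hsne k); rwa [hslen] at h2
  have hrotW : ∀ k, k < n → ∀ i, periodW (rot r k) i = periodW r (k + i) :=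
    fun k hk i => periodW_rot hrne hk i
  have hPbk : ∀ k, k < n → P k (b + k) := by
    intro k hk i
    rw [show b + k + i = b + (k + i) by omega, hWb, hrotW k hk]
  have hPinf : ∀ k, k < n → P k (sInf {ℓ | P k ℓ}) :=
    fun k hk => Nat.sInf_mem (⟨b + k, hPbk k hk⟩ : Set.Nonempty {ℓ | P k ℓ})
  have hXlen : ∀ k, (X k).length = sInf {ℓ | P k ℓ} := by intro k; simp [hX]
  have hXget : ∀ k p (h : p < (X k).length), (X k)[p] = W p := by
    intro k p h
    simp [hX]
  have hfact1 : ∀ k, k < n → prependW (X k) (periodW (rot r k)) = W := by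
    intro k hk
    funext i
    rcases Nat.lt_or_ge i (X k).length with h | h
    · rw [prependW_lt h, hXget k i h]
    · rw [prependW_ge h]
      have h2 := hPinf k hk (i - (X k).length)
      rw [← hXlen k] at h2
      rw [← h2]
      congr 1; omega
  have hcong : ∀ k, k < n → ∀ ℓ₁ ℓ₂, P k ℓ₁ → P k ℓ₂ → ℓ₁ ≤ ℓ₂ → n ∣ ℓ₂ - ℓ₁ := by
    intro k hk ℓ₁ ℓ₂ h1 h2 hle
    rcases Nat.eq_or_lt_of_le hle with rfl | hlt
    · simp
    · have hd0 : 0 < ℓ₂ - ℓ₁ := by omega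
      have hperd : Per (periodW (rot r k)) (ℓ₂ - ℓ₁) := by
        intro i
        have e1 := h1 (i + (ℓ₂ - ℓ₁))
        have e2 := h2 i
        rw [show ℓ₁ + (i + (ℓ₂ - ℓ₁)) = ℓ₂ + i by omega] at e1
        rw [← e1, ← e2]
      have hperr : Per (periodW r) (ℓ₂ - ℓ₁) := by
        refine per_of_tail (periodW_per hrne) hn0 (c := k) ?_
        intro i
        have e1 := hrotW k hk (i + (ℓ₂ - ℓ₁))
        have e2 := hrotW k hk i
        rw [show k + i + (ℓ₂ - ℓ₁) = k + (i + (ℓ₂ - ℓ₁)) by omega, ← e1, ← e2, hperd i]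
      exact smallest_dvd hrS hd0 hperr
  have hfact2 : ∀ k, k < n → ∀ x' : List α, X k ≠ x' ++ rot r k := by
    intro k hk x' hEq
    have hlen2 : (X k).length = x'.length + n := by rw [hEq]; simp [hslen]
    have hXl := hXlen k
    have hP2 : P k (sInf {ℓ | P k ℓ} - n) := by
      intro i
      rcases Nat.lt_or_ge i n with h | h
      · have hidx : sInf {ℓ | P k ℓ} - n + i < (X k).length := by omega
        rw [← hXget k _ hidx]
        have hgoal : (X k)[sInf {ℓ | P k ℓ} - n + i]'hidx
            = (x' ++ rot r k)[sInf {ℓ | P k ℓ} - n + i]'(by rw [← hEq]; exact hidx) :=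
          List.getElem_of_eq hEq _
        rw [hgoal, List.getElem_append_right (by omega)]
        have hpw : periodW (rot r k) i = (rot r k).getD (i % n) default := by
          show (rot r k).getD (i % (rot r k).length) default = _
          rw [hslen]
        rw [hpw, Nat.mod_eq_of_lt h, List.getD_eq_getElem _ _ (by rw [hslen]; omega)]
        congr 1
        omega
      · have h2 := hPinf k hk (i - n)
        rw [show sInf {ℓ | P k ℓ} - n + i = sInf {ℓ | P k ℓ} + (i - n) by omega, h2]
        have h3 := hsper k (i - n)
        rw [show i - n + n = i by omega] at h3
        rw [← h3]
    have h4 := Nat.sInf_le (show (sInf {ℓ | P k ℓ} - n) ∈ {ℓ | P k ℓ} from hP2)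
    omega
  refine ⟨X, fun k hk => ⟨hfact1 k hk, hfact2 k hk⟩, ?_⟩
  intro u' v' hv'
  constructor
  · intro hdec
    set a := u'.length with ha
    set m := v'.length with hm
    have hm0 : 0 < m := List.length_pos_iff.mpr hv'
    have hWa : ∀ i, W (a + i) = periodW v' i := by
      intro i; rw [← hdec, prependW_ge (by omega)]; congr 1; omega
    have hWu' : ∀ p (h : p < a), W p = u'[p] := by
      intro p h; rw [← hdec, prependW_lt h]
    set M := max a b with hM
    have haM : a ≤ M := le_max_left a b
    have hbM : b ≤ M := le_max_right a b
    have h1 : Per (fun i => W (M + i)) m := by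
      intro i
      show W (M + (i + m)) = W (M + i)
      rw [show M + (i + m) = a + (M - a + i + m) by omega,
          show M + i = a + (M - a + i) by omega, hWa, hWa]
      exact periodW_per hv' _
    have h2 : Per (fun i => W (M + i)) n := by
      intro i
      show W (M + (i + n)) = W (M + i)
      rw [show M + (i + n) = b + (M - b + i + n) by omega,
          show M + i = b + (M - b + i) by omega, hWb, hWb]
      exact periodW_per hrne _
    have hg : Per (fun i => W (M + i)) (Nat.gcd m n) := per_gcd h1 h2
    have hgr : Per (periodW r) (Nat.gcd m n) := by
      refine per_of_tail (periodW_per hrne) hn0 (c := M - b) ?_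
      intro i
      have e1 := hg i
      simp only at e1
      rw [show M + (i + Nat.gcd m n) = b + (M - b + i + Nat.gcd m n) by omega,
          show M + i = b + (M - b + i) by omega, hWb, hWb] at e1
      exact e1
    have hgpos : 0 < Nat.gcd m n := Nat.gcd_pos_of_pos_left _ hm0
    have hnm : n ∣ m := (smallest_dvd hrS hgpos hgr).trans (Nat.gcd_dvd_left m n)
    obtain ⟨j, hj⟩ := hnm
    have hj1 : 1 ≤ j := by
      rcases Nat.eq_zero_or_pos j with h0 | h0
      · exfalso; rw [h0, Nat.mul_zero] at hj; omega
      · exact h0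
    set k := (a + b * n - b) % n with hk
    have hkn : k < n := Nat.mod_lt _ hn0
    have hbbn : b ≤ b * n := Nat.le_mul_of_pos_right b hn0
    have hbm : b ≤ b * m := Nat.le_mul_of_pos_right b hm0
    have hmod : (a + b * m - b) ≡ k [MOD n] := by
      have h6 : a + b * m ≡ a + b * n [MOD n] := by
        refine Nat.ModEq.add_left a ?_
        have e1 : b * m ≡ 0 [MOD n] := (Nat.modEq_zero_iff_dvd).mpr ⟨b * j, by rw [hj]; ring⟩
        have e2 : b * n ≡ 0 [MOD n] := (Nat.modEq_zero_iff_dvd).mpr ⟨b, by ring⟩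
        exact e1.trans e2.symm
      have h7 : (a + b * m - b) + b ≡ (a + b * n - b) + b [MOD n] := by
        rw [show (a + b * m - b) + b = a + b * m by omega,
            show (a + b * n - b) + b = a + b * n by omega]
        exact h6
      have h8 : (a + b * m - b) ≡ (a + b * n - b) [MOD n] := h7.add_right_cancel' b
      exact h8.trans (Nat.mod_modEq _ n).symm
    have hmain : ∀ p, periodW v' p = periodW r (k + p) := by
      intro p
      have hper : Per (periodW v') m := periodW_per hv'
      have e1 : periodW v' p = periodW v' (p + b * m) := (per_mul hper b p).symm
      have e2 : W (a + (p + b * m)) = periodW v' (p + b * m) := hWa _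
      have e3 : W (a + (p + b * m)) = periodW r (a + p + b * m - b) := by
        rw [show a + (p + b * m) = b + (a + p + b * m - b) by omega, hWb]
      have e4 : periodW r (a + p + b * m - b) = periodW r (k + p) := by
        refine per_congr (periodW_per hrne) ?_
        have h9 := hmod.add_right p
        rw [show (a + b * m - b) + p = a + p + b * m - b by omega] at h9
        exact h9
      rw [e1, ← e2, e3, e4]
    have hv'rep : v' = rep (rot r k) j := by
      refine List.ext_getElem (by rw [rep_length, hslen]; show m = j * n; rw [hj, Nat.mul_comm]) ?_
      intro p h1p h2p
      rw [← periodW_getElem h1p, hmain p, ← hrotW k hkn p,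
        ← List.getD_eq_getElem _ default h2p,
        rep_getD (hsne k) (by rw [rep_length] at h2p; exact h2p)]
      rfl
    have hPka : P k a := by
      intro i
      rw [hWa i, hmain i, ← hrotW k hkn i]
    have hle : sInf {ℓ | P k ℓ} ≤ a := Nat.sInf_le (show a ∈ {ℓ | P k ℓ} from hPka)
    obtain ⟨i, hi⟩ := hcong k hkn _ a (hPinf k hkn) hPka hle
    refine ⟨k, hkn, i, j, hj1, ?_, hv'rep⟩
    refine List.ext_getElem ?_ ?_
    · rw [List.length_append, hXlen, rep_length, hslen]
      show a = _
      have hcomm : i * n = n * i := Nat.mul_comm i n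
      omega
    · intro p h1p h2p
      rw [← hWu' p h1p]
      rcases Nat.lt_or_ge p (X k).length with h | h
      · rw [List.getElem_append_left h, hXget k p h]
      · rw [List.getElem_append_right h]
        have hq : p - (X k).length < (rep (rot r k) i).length := by
          rw [List.length_append] at h2p; omega
        rw [← List.getD_eq_getElem _ default hq,
          rep_getD (hsne k) (by rw [rep_length] at hq; exact hq)]
        have e5 := hPinf k hkn (p - (X k).length)
        rw [← hXlen k] at e5
        calc W p = W ((X k).length + (p - (X k).length)) := by congr 1; omega
          _ = periodW (rot r k) (p - (X k).length) := e5
          _ = (rot r k).getD ((p - (X k).length) % (rot r k).length) default := rfl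
  · rintro ⟨k, hk, i, j, hj1, hu', hveq⟩
    subst hu'; subst hveq
    rw [periodW_rep (hsne k) hj1, prependW_append, prependW_rep (hsne k)]
    exact hfact1 k hk
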